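/- For every n ≥ 1, the level-n Schreier graph Γ_n of the Grigorchuk group is connected and its diameter equals 2^n − 1. -/

import Mathlib

noncomputable section

/-- The generator `a` of the Grigorchuk group acting on finite binary words:
`a(xw) = (1−x)w`. -/
def grigA : List Bool → List Bool
  | [] => []
  | x :: w => (!x) :: w

mutual
  /-- The generator `b`: `b(0w) = 0·a(w)`, `b(1w) = 1·c(w)`. -/
  def grigB : List Bool → List Bool
    | [] => []
    | false :: w => false :: grigA w
    | true :: w => true :: grigC w
  /-- The generator `c`: `c(0w) = 0·a(w)`, `c(1w) = 1·d(w)`. -/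
  def grigC : List Bool → List Bool
    | [] => []
    | false :: w => false :: grigA w
    | true :: w => true :: grigD w
  /-- The generator `d`: `d(0w) = 0·w`, `d(1w) = 1·b(w)`. -/
  def grigD : List Bool → List Bool
    | [] => []
    | false :: w => false :: w
    | true :: w => true :: grigB w
end

/-- The level-`n` Schreier graph `Γ_n` of the Grigorchuk group: vertices are binary words of
length `n`, and distinct `x, y` are adjacent iff `y ∈ {a(x), b(x), c(x), d(x)}`
(the relation is symmetrized; since `a, b, c, d` are involutions it is the same relation). -/
def grigGraph (n : ℕ) : SimpleGraph (List.Vector Bool n) where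
  Adj x y := x ≠ y ∧ ∃ s ∈ [grigA, grigB, grigC, grigD],
    s x.toList = y.toList ∨ s y.toList = x.toList
  symm := by
    constructor
    rintro x y ⟨h1, s, hs, h2⟩
    exact ⟨h1.symm, s, hs, h2.symm⟩
  loopless := ⟨fun x h => h.1 rfl⟩

/-- Index of a word in the path ordering of the Schreier graph. -/
def iota : List Bool → ℕ
  | [] => 0
  | x :: w => 2 * iota w + (iota w + (if x then 0 else 1)) % 2

lemma iota_nil : iota [] = 0 := rfl
lemma iota_true (w : List Bool) : iota (true :: w) = 2 * iota w + iota w % 2 := by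
  show 2 * iota w + (iota w + (if true then 0 else 1)) % 2 = _
  norm_num
lemma iota_false (w : List Bool) :
    iota (false :: w) = 2 * iota w + (iota w + 1) % 2 := by
  show 2 * iota w + (iota w + (if false then 0 else 1)) % 2 = _
  norm_num

lemma grigA_length (w : List Bool) : (grigA w).length = w.length := by
  cases w <;> rfl

lemma grigBCD_length (w : List Bool) :
    (grigB w).length = w.length ∧ (grigC w).length = w.length ∧
      (grigD w).length = w.length := by
  induction w with
  | nil => exact ⟨rfl, rfl, rfl⟩
  | cons x v ih =>
    cases x <;>
      simp [grigB, grigC, grigD, grigA_length, ih.1, ih.2.1, ih.2.2]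

lemma iota_lt (w : List Bool) : iota w < 2 ^ w.length := by
  induction w with
  | nil => simp [iota_nil]
  | cons x v ih =>
    cases x <;>
      simp only [iota_true, iota_false, List.length_cons, pow_succ] <;> omega

lemma iota_inj : ∀ (w v : List Bool), w.length = v.length → iota w = iota v → w = v := by
  intro w
  induction w with
  | nil =>
    intro v hl _
    cases v with
    | nil => rfl
    | cons y t => simp at hl
  | cons x u ih =>
    intro v hl he
    cases v with
    | nil => simp at hl
    | cons y t =>
      simp only [List.length_cons] at hl
      have hl' : u.length = t.length := by omega
      have hk : iota u = iota t := by
        cases x <;> cases y <;> simp only [iota_true, iota_false] at he <;> omega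
      have hut : u = t := ih t hl' hk
      subst hut
      have hxy : x = y := by
        cases x <;> cases y <;> simp only [iota_true, iota_false] at he <;>
          first | rfl | omega
      rw [hxy]

lemma iotaA (x : Bool) (v : List Bool) :
    (iota (x :: v) % 2 = 0 ∧ iota (grigA (x :: v)) = iota (x :: v) + 1) ∨
    (iota (x :: v) % 2 = 1 ∧ iota (grigA (x :: v)) + 1 = iota (x :: v)) := by
  cases x <;>
    simp only [grigA, Bool.not_true, Bool.not_false, iota_true, iota_false] <;> omega

/-- The generators b, c, d move the index by at most one, up from odd, down from even. -/
lemma moveBCD : ∀ (w : List Bool),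
    (iota (grigB w) = iota w ∨ (iota w % 2 = 1 ∧ iota (grigB w) = iota w + 1) ∨
      (iota w % 2 = 0 ∧ iota (grigB w) + 1 = iota w)) ∧
    (iota (grigC w) = iota w ∨ (iota w % 2 = 1 ∧ iota (grigC w) = iota w + 1) ∨
      (iota w % 2 = 0 ∧ iota (grigC w) + 1 = iota w)) ∧
    (iota (grigD w) = iota w ∨ (iota w % 2 = 1 ∧ iota (grigD w) = iota w + 1) ∨
      (iota w % 2 = 0 ∧ iota (grigD w) + 1 = iota w)) := by
  intro w
  induction w with
  | nil => simp [grigB, grigC, grigD]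
  | cons x v ih =>
    obtain ⟨ihB, ihC, ihD⟩ := ih
    cases x with
    | false =>
      simp only [grigB, grigC, grigD]
      refine ⟨?_, ?_, ?_⟩
      · cases v with
        | nil => simp [grigA]
        | cons y u =>
          rcases iotaA y u with ⟨h1, h2⟩ | ⟨h1, h2⟩ <;>
            simp only [iota_false] at * <;> omega
      · cases v with
        | nil => simp [grigA]
        | cons y u =>
          rcases iotaA y u with ⟨h1, h2⟩ | ⟨h1, h2⟩ <;>
            simp only [iota_false] at * <;> omega
      · left; trivial
    | true =>
      simp only [grigB, grigC, grigD]
      refine ⟨?_, ?_, ?_⟩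
      · rcases ihC with h | ⟨h1, h2⟩ | ⟨h1, h2⟩ <;>
          simp only [iota_true] at * <;> omega
      · rcases ihD with h | ⟨h1, h2⟩ | ⟨h1, h2⟩ <;>
          simp only [iota_true] at * <;> omega
      · rcases ihB with h | ⟨h1, h2⟩ | ⟨h1, h2⟩ <;>
          simp only [iota_true] at * <;> omega

lemma stepOdd : ∀ (w : List Bool), iota w % 2 = 1 → iota w + 1 < 2 ^ w.length →
    ∃ s ∈ ([grigB, grigC, grigD] : List (List Bool → List Bool)),
      iota (s w) = iota w + 1 := by
  intro w
  induction w with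
  | nil => intro h; simp [iota_nil] at h
  | cons x v ih =>
    intro hodd hlt
    cases x with
    | false =>
      cases v with
      | nil => simp [iota_false, iota_nil] at hlt
      | cons y u =>
        refine ⟨grigB, by simp, ?_⟩
        simp only [grigB]
        rcases iotaA y u with ⟨h1, h2⟩ | ⟨h1, h2⟩ <;>
          simp only [iota_false] at * <;> omega
    | true =>
      have hk : iota v % 2 = 1 := by
        simp only [iota_true] at hodd; omega
      have hklt : iota v + 1 < 2 ^ v.length := by
        simp only [iota_true, List.length_cons, pow_succ] at hlt ⊢
        omega
      obtain ⟨s', hs', hs'i⟩ := ih hk hklt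
      simp only [List.mem_cons, List.mem_singleton, List.not_mem_nil, or_false] at hs'
      rcases hs' with h | h | h
      · refine ⟨grigD, by simp, ?_⟩
        simp only [grigD]
        subst h
        simp only [iota_true] at *
        omega
      · refine ⟨grigB, by simp, ?_⟩
        simp only [grigB]
        subst h
        simp only [iota_true] at *
        omega
      · refine ⟨grigC, by simp, ?_⟩
        simp only [grigC]
        subst h
        simp only [iota_true] at *
        omega

lemma step_up (w : List Bool) (hw : w ≠ []) (hlt : iota w + 1 < 2 ^ w.length) :
    ∃ s ∈ ([grigA, grigB, grigC, grigD] : List (List Bool → List Bool)),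
      iota (s w) = iota w + 1 := by
  rcases Nat.mod_two_eq_zero_or_one (iota w) with h | h
  · cases w with
    | nil => exact absurd rfl hw
    | cons x v =>
      refine ⟨grigA, by simp, ?_⟩
      rcases iotaA x v with ⟨h1, h2⟩ | ⟨h1, h2⟩ <;> omega
  · obtain ⟨s, hs, hsi⟩ := stepOdd w h hlt
    refine ⟨s, ?_, hsi⟩
    simp only [List.mem_cons, List.mem_singleton] at hs ⊢
    tauto

lemma length_pres : ∀ s ∈ ([grigA, grigB, grigC, grigD] : List (List Bool → List Bool)),
    ∀ w : List Bool, (s w).length = w.length := by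
  intro s hs w
  simp only [List.mem_cons, List.mem_singleton, List.not_mem_nil, or_false] at hs
  rcases hs with h | h | h | h <;> subst h
  · exact grigA_length w
  · exact (grigBCD_length w).1
  · exact (grigBCD_length w).2.1
  · exact (grigBCD_length w).2.2

lemma move_any : ∀ s ∈ ([grigA, grigB, grigC, grigD] : List (List Bool → List Bool)),
    ∀ w : List Bool, iota (s w) ≤ iota w + 1 ∧ iota w ≤ iota (s w) + 1 := by
  intro s hs w
  simp only [List.mem_cons, List.mem_singleton, List.not_mem_nil, or_false] at hs
  rcases hs with h | h | h | h <;> subst h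
  · cases w with
    | nil => simp [grigA]
    | cons x v => rcases iotaA x v with ⟨h1, h2⟩ | ⟨h1, h2⟩ <;> omega
  · rcases (moveBCD w).1 with h | ⟨_, h⟩ | ⟨_, h⟩ <;> omega
  · rcases (moveBCD w).2.1 with h | ⟨_, h⟩ | ⟨_, h⟩ <;> omega
  · rcases (moveBCD w).2.2 with h | ⟨_, h⟩ | ⟨_, h⟩ <;> omega

lemma adj_iota {n : ℕ} {x y : List.Vector Bool n} (h : (grigGraph n).Adj x y) :
    iota y.toList ≤ iota x.toList + 1 ∧ iota x.toList ≤ iota y.toList + 1 := by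
  obtain ⟨_, s, hs, hxy | hyx⟩ := h
  · have := move_any s hs x.toList; rw [hxy] at this; omega
  · have := move_any s hs y.toList; rw [hyx] at this; omega

lemma walk_bound {n : ℕ} {x y : List.Vector Bool n} (p : (grigGraph n).Walk x y) :
    iota y.toList ≤ iota x.toList + p.length ∧
      iota x.toList ≤ iota y.toList + p.length := by
  induction p with
  | nil => simp
  | cons hadj p ih =>
    have := adj_iota hadj
    simp only [SimpleGraph.Walk.length_cons]
    omega

lemma walk_up {n : ℕ} (hn : 1 ≤ n) : ∀ (m : ℕ) (x y : List.Vector Bool n),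
    iota x.toList + m = iota y.toList →
    ∃ p : (grigGraph n).Walk x y, p.length = m := by
  intro m
  induction m with
  | zero =>
    intro x y h
    have hxy : x = y := by
      apply List.Vector.toList_injective
      apply iota_inj _ _ (by rw [x.toList_length, y.toList_length])
      omega
    subst hxy
    exact ⟨SimpleGraph.Walk.nil, rfl⟩
  | succ m ih =>
    intro x y h
    have hylt : iota y.toList < 2 ^ n := by
      have := iota_lt y.toList; rwa [y.toList_length] at this
    have hne : x.toList ≠ [] := by
      have := x.toList_length; intro hcon; rw [hcon] at this; simp at this; omega
    have hlt : iota x.toList + 1 < 2 ^ x.toList.length := by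
      rw [x.toList_length]; omega
    obtain ⟨s, hs, hsi⟩ := step_up x.toList hne hlt
    set x' : List.Vector Bool n :=
      ⟨s x.toList, by rw [length_pres s hs, x.toList_length]⟩ with hx'
    have hx't : x'.toList = s x.toList := rfl
    have hadj : (grigGraph n).Adj x x' := by
      refine ⟨?_, s, hs, Or.inl hx't.symm⟩
      intro hcon
      have hiq : iota x.toList = iota x'.toList := by rw [hcon]
      rw [hx't, hsi] at hiq
      omega
    obtain ⟨p, hp⟩ := ih x' y (by rw [hx't, hsi]; omega)
    exact ⟨SimpleGraph.Walk.cons hadj p, by simp [hp]⟩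

lemma grig_reachable {n : ℕ} (hn : 1 ≤ n) (x y : List.Vector Bool n) :
    (grigGraph n).Reachable x y := by
  rcases le_total (iota x.toList) (iota y.toList) with h | h
  · obtain ⟨p, _⟩ := walk_up hn (iota y.toList - iota x.toList) x y (by omega)
    exact ⟨p⟩
  · obtain ⟨p, _⟩ := walk_up hn (iota x.toList - iota y.toList) y x (by omega)
    exact ⟨p.reverse⟩

lemma iota_rep_true (m : ℕ) : iota (List.replicate m true) = 0 := by
  induction m with
  | zero => rfl
  | succ m ih => simp [List.replicate_succ, iota_true, ih]

lemma iota_max (m : ℕ) : iota (List.replicate m true ++ [false]) = 2 ^ (m + 1) - 1 := by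
  induction m with
  | zero => simp [iota_false, iota_nil]
  | succ m ih =>
    have h2 : 1 ≤ 2 ^ (m + 1) := Nat.one_le_two_pow
    have heven : 2 ^ (m + 1) % 2 = 0 := by
      rw [pow_succ, Nat.mul_mod]; simp
    simp only [List.replicate_succ, List.cons_append, iota_true, ih]
    rw [pow_succ (2 : ℕ) (m + 1)]
    omega

/-- for every `n ≥ 1` the level-`n` Schreier graph `Γ_n` of the Grigorchuk group
is connected and has diameter `2^n − 1`. -/
theorem statement_5 (n : ℕ) (hn : 1 ≤ n) :
    (grigGraph n).Connected ∧
      Finset.univ.sup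
          (fun pq : List.Vector Bool n × List.Vector Bool n =>
            (grigGraph n).dist pq.1 pq.2) = 2 ^ n - 1 := by
  have hconn : (grigGraph n).Connected := by
    rw [SimpleGraph.connected_iff]
    exact ⟨fun x y => grig_reachable hn x y, ⟨⟨List.replicate n true, by simp⟩⟩⟩
  refine ⟨hconn, le_antisymm ?_ ?_⟩
  · apply Finset.sup_le
    intro pq _
    obtain ⟨x, y⟩ := pq
    have hx : iota x.toList < 2 ^ n := by
      have := iota_lt x.toList; rwa [x.toList_length] at this
    have hy : iota y.toList < 2 ^ n := by
      have := iota_lt y.toList; rwa [y.toList_length] at this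
    rcases le_total (iota x.toList) (iota y.toList) with h | h
    · obtain ⟨p, hp⟩ := walk_up hn (iota y.toList - iota x.toList) x y (by omega)
      have := SimpleGraph.dist_le p
      simp only [hp] at this
      calc (grigGraph n).dist x y ≤ _ := this
        _ ≤ 2 ^ n - 1 := by omega
    · obtain ⟨p, hp⟩ := walk_up hn (iota x.toList - iota y.toList) y x (by omega)
      have := SimpleGraph.dist_le p.reverse
      simp only [SimpleGraph.Walk.length_reverse, hp] at this
      calc (grigGraph n).dist x y ≤ _ := this
        _ ≤ 2 ^ n - 1 := by omega
  · set x0 : List.Vector Bool n := ⟨List.replicate n true, by simp⟩ with hx0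
    set x1 : List.Vector Bool n :=
      ⟨List.replicate (n - 1) true ++ [false], by simp [Nat.sub_add_cancel hn]⟩ with hx1
    have h0 : iota x0.toList = 0 := iota_rep_true n
    have h1 : iota x1.toList = 2 ^ n - 1 := by
      show iota (List.replicate (n - 1) true ++ [false]) = 2 ^ n - 1
      rw [iota_max (n - 1), Nat.sub_add_cancel hn]
    have hd : 2 ^ n - 1 ≤ (grigGraph n).dist x0 x1 := by
      obtain ⟨p, hp⟩ := (grig_reachable hn x0 x1).exists_walk_length_eq_dist
      have hb := walk_bound p
      rw [h0, h1, hp] at hb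
      omega
    exact le_trans hd (Finset.le_sup (f := fun pq : List.Vector Bool n × List.Vector Bool n =>
      (grigGraph n).dist pq.1 pq.2) (Finset.mem_univ (x0, x1)))
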